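/- Let (X,+) be an abelian group equipped with a translation-invariant metric d such that X is complete and locally compact. Let A ⊆ X be a nonempty compact set with S(A) = {0}. Then the spectre operator S is continuous at A as a map on nonempty compact subsets of X with the Hausdorff distance: for every sequence (A_n) of nonempty compact subsets of X converging to A in d_H, the sequence (S(A_n)) converges to S(A) = {0} in d_H. -/

import Mathlib

open Metric Filter

/-- The spectre of a set `A` in an abelian group. -/
def spectre {X : Type*} [AddCommGroup X] (A : Set X) : Set X :=
  {z | ∀ x ∈ A, x + z ∈ A ∨ x - z ∈ A}

section helpers
variable {X : Type*} [AddCommGroup X] [MetricSpace X]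

lemma spec_dist_add_left (hd : ∀ x y z : X, dist (x + z) (y + z) = dist x y) (a b c : X) :
    dist (a + b) (a + c) = dist b c := by
  rw [add_comm a b, add_comm a c, hd]

lemma spec_dist_neg (hd : ∀ x y z : X, dist (x + z) (y + z) = dist x y) (a b : X) :
    dist (-a) (-b) = dist a b := by
  have h := hd (-a) (-b) (a + b)
  rw [neg_add_cancel_left] at h
  rw [← h, add_comm a b, neg_add_cancel_left, dist_comm]

lemma spec_dist_add_add_le (hd : ∀ x y z : X, dist (x + z) (y + z) = dist x y) (a b c d : X) :
    dist (a + b) (c + d) ≤ dist a c + dist b d := by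
  calc dist (a + b) (c + d) ≤ dist (a + b) (c + b) + dist (c + b) (c + d) := dist_triangle _ _ _
  _ = dist a c + dist b d := by rw [hd, spec_dist_add_left hd]

lemma spec_dist_sub_sub_le (hd : ∀ x y z : X, dist (x + z) (y + z) = dist x y) (a b c d : X) :
    dist (a - b) (c - d) ≤ dist a c + dist b d := by
  simp only [sub_eq_add_neg]
  calc dist (a + -b) (c + -d) ≤ dist a c + dist (-b) (-d) := spec_dist_add_add_le hd _ _ _ _
  _ = dist a c + dist b d := by rw [spec_dist_neg hd]

lemma spec_sub_continuous (hd : ∀ x y z : X, dist (x + z) (y + z) = dist x y) :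
    Continuous fun p : X × X => p.1 - p.2 := by
  refine (LipschitzWith.of_dist_le_mul (K := 2) fun p q => ?_).continuous
  calc dist (p.1 - p.2) (q.1 - q.2) ≤ dist p.1 q.1 + dist p.2 q.2 := spec_dist_sub_sub_le hd _ _ _ _
  _ ≤ 2 * dist p q := by
      rw [Prod.dist_eq]
      have := le_max_left (dist p.1 q.1) (dist p.2 q.2)
      have := le_max_right (dist p.1 q.1) (dist p.2 q.2)
      linarith

omit [MetricSpace X] in
lemma spec_zero_mem_spectre (S : Set X) : (0 : X) ∈ spectre S := by
  intro x hx; left; simpa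

end helpers

theorem spectre_continuous_of_trivial_spectre {X : Type*} [AddCommGroup X] [MetricSpace X]
    [CompleteSpace X] [LocallyCompactSpace X]
    (hd : ∀ x y z : X, dist (x + z) (y + z) = dist x y)
    (A : Set X) (hAne : A.Nonempty) (hAc : IsCompact A)
    (hS : spectre A = ({0} : Set X)) :
    ∀ Aseq : ℕ → Set X, (∀ n, (Aseq n).Nonempty) → (∀ n, IsCompact (Aseq n)) →
      Tendsto (fun n => hausdorffDist (Aseq n) A) atTop (nhds 0) →
      Tendsto (fun n => hausdorffDist (spectre (Aseq n)) (spectre A)) atTop (nhds 0) := by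
  intro Aseq hne hc htend
  rw [hS]
  -- finiteness of Hausdorff edists
  have hfin : ∀ n, EMetric.hausdorffEdist (Aseq n) A ≠ ⊤ := fun n =>
    Metric.hausdorffEdist_ne_top_of_nonempty_of_bounded (hne n) hAne
      (hc n).isBounded hAc.isBounded
  have hfin' : ∀ n, EMetric.hausdorffEdist A (Aseq n) ≠ ⊤ := fun n => by
    show hausdorffEDist A (Aseq n) ≠ ⊤; rw [hausdorffEDist_comm]; exact hfin n
  -- nearest point in A to any point of Aseq n
  have hnear : ∀ n, ∀ w ∈ Aseq n, ∃ a ∈ A, dist w a ≤ hausdorffDist (Aseq n) A := by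
    intro n w hw
    obtain ⟨a, ha, hda⟩ := hAc.exists_infDist_eq_dist hAne w
    exact ⟨a, ha, by rw [← hda]; exact Metric.infDist_le_hausdorffDist_of_mem hw (hfin n)⟩
  -- nearest point in Aseq n to any point of A
  have hnear' : ∀ n, ∀ x ∈ A, ∃ y ∈ Aseq n, dist x y ≤ hausdorffDist (Aseq n) A := by
    intro n x hx
    obtain ⟨y, hy, hdy⟩ := (hc n).exists_infDist_eq_dist (hne n) x
    refine ⟨y, hy, ?_⟩
    rw [← hdy, hausdorffDist_comm]
    exact Metric.infDist_le_hausdorffDist_of_mem hx (hfin' n)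
  by_contra hcon
  obtain ⟨ε, hε, hfreq⟩ : ∃ ε > 0, ∃ᶠ n in atTop,
      ε ≤ hausdorffDist (spectre (Aseq n)) ({0} : Set X) := by
    by_contra h
    push_neg at h
    apply hcon
    rw [Metric.tendsto_atTop]
    intro δ hδ
    obtain ⟨N, hN⟩ := Filter.eventually_atTop.mp (h δ hδ)
    refine ⟨N, fun n hn => ?_⟩
    rw [Real.dist_eq, sub_zero, abs_of_nonneg hausdorffDist_nonneg]
    exact hN n hn
  -- extract subsequence where the spectre stays ε-large
  obtain ⟨φ, hφ, hφε⟩ := Filter.extraction_of_frequently_atTop hfreq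
  -- on this subsequence, find spectre elements far from 0
  have hzex : ∀ k, ∃ z ∈ spectre (Aseq (φ k)), ε / 2 < dist z 0 := by
    intro k
    by_contra hno
    push_neg at hno
    have hle : hausdorffDist (spectre (Aseq (φ k))) ({0} : Set X) ≤ ε / 2 := by
      refine hausdorffDist_le_of_mem_dist (by positivity) ?_ ?_
      · exact fun z hz => ⟨0, rfl, hno z hz⟩
      · intro y hy
        refine ⟨0, spec_zero_mem_spectre _, ?_⟩
        rw [Set.mem_singleton_iff] at hy
        simp [hy]; positivity
    have := hφε k
    linarith
  choose z hzmem hzfar using hzex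
  -- base points
  choose xb hxb using fun k => hne (φ k)
  -- each z k is 2·h-close to the compact difference set D = A - A
  set D : Set X := (fun p : X × X => p.1 - p.2) '' (A ×ˢ A) with hD_def
  have hDc : IsCompact D := (hAc.prod hAc).image (spec_sub_continuous hd)
  have hdk : ∀ k, ∃ p ∈ D, dist (z k) p ≤ 2 * hausdorffDist (Aseq (φ k)) A := by
    intro k
    rcases hzmem k (xb k) (hxb k) with hw | hw
    · obtain ⟨a, ha, hda⟩ := hnear (φ k) _ hw
      obtain ⟨b, hb, hdb⟩ := hnear (φ k) _ (hxb k)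
      refine ⟨a - b, ⟨(a, b), ⟨ha, hb⟩, rfl⟩, ?_⟩
      have hz : z k = (xb k + z k) - xb k := by abel
      rw [hz]
      calc dist ((xb k + z k) - xb k) (a - b) ≤ dist (xb k + z k) a + dist (xb k) b :=
            spec_dist_sub_sub_le hd _ _ _ _
        _ ≤ 2 * hausdorffDist (Aseq (φ k)) A := by linarith
    · obtain ⟨a, ha, hda⟩ := hnear (φ k) _ hw
      obtain ⟨b, hb, hdb⟩ := hnear (φ k) _ (hxb k)
      refine ⟨b - a, ⟨(b, a), ⟨hb, ha⟩, rfl⟩, ?_⟩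
      have hz : z k = xb k - (xb k - z k) := by abel
      rw [hz]
      calc dist (xb k - (xb k - z k)) (b - a) ≤ dist (xb k) b + dist (xb k - z k) a :=
            spec_dist_sub_sub_le hd _ _ _ _
        _ ≤ 2 * hausdorffDist (Aseq (φ k)) A := by linarith
  choose dk hdkD hdkz using hdk
  -- extract convergent subsequence of dk
  obtain ⟨ζ, hζD, ψ, hψ, hdlim⟩ := hDc.tendsto_subseq hdkD
  -- Hausdorff distances along the subsequence tend to 0
  have hh0 : Tendsto (fun k => hausdorffDist (Aseq (φ (ψ k))) A) atTop (nhds 0) := by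
    have := htend.comp ((hφ.comp hψ).tendsto_atTop)
    simpa [Function.comp_def] using this
  -- z ∘ ψ → ζ
  have hzlim : Tendsto (fun k => z (ψ k)) atTop (nhds ζ) := by
    refine hdlim.congr_dist ?_
    have hb : ∀ k, dist (dk (ψ k)) (z (ψ k)) ≤ 2 * hausdorffDist (Aseq (φ (ψ k))) A := by
      intro k; rw [dist_comm]; exact hdkz (ψ k)
    refine squeeze_zero (fun k => dist_nonneg) hb ?_
    simpa using hh0.const_mul 2
  -- ζ is far from 0
  have hζfar : ε / 2 ≤ dist ζ 0 := by
    refine ge_of_tendsto' (hzlim.dist (tendsto_const_nhds : Tendsto _ atTop (nhds (0 : X))))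
      fun k => le_of_lt (hzfar (ψ k))
  -- but ζ ∈ spectre A
  have hζspec : ζ ∈ spectre A := by
    intro x hx
    choose y hy hdy using fun k => hnear' (φ (ψ k)) x hx
    set m := min (infDist (x + ζ) A) (infDist (x - ζ) A) with hm
    have hkey : ∀ k, m ≤ (dist x (y k) + dist ζ (z (ψ k))) + hausdorffDist (Aseq (φ (ψ k))) A := by
      intro k
      rcases hzmem (ψ k) (y k) (hy k) with hw | hw
      · calc m ≤ infDist (x + ζ) A := min_le_left _ _
          _ ≤ infDist (y k + z (ψ k)) A + dist (x + ζ) (y k + z (ψ k)) :=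
              Metric.infDist_le_infDist_add_dist
          _ ≤ hausdorffDist (Aseq (φ (ψ k))) A + (dist x (y k) + dist ζ (z (ψ k))) := by
              have h1 := Metric.infDist_le_hausdorffDist_of_mem hw (hfin (φ (ψ k)))
              have h2 := spec_dist_add_add_le hd x ζ (y k) (z (ψ k))
              linarith
          _ = _ := by ring
      · calc m ≤ infDist (x - ζ) A := min_le_right _ _
          _ ≤ infDist (y k - z (ψ k)) A + dist (x - ζ) (y k - z (ψ k)) :=
              Metric.infDist_le_infDist_add_dist
          _ ≤ hausdorffDist (Aseq (φ (ψ k))) A + (dist x (y k) + dist ζ (z (ψ k))) := by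
              have h1 := Metric.infDist_le_hausdorffDist_of_mem hw (hfin (φ (ψ k)))
              have h2 := spec_dist_sub_sub_le hd x ζ (y k) (z (ψ k))
              linarith
          _ = _ := by ring
    have hrhs : Tendsto
        (fun k => (dist x (y k) + dist ζ (z (ψ k))) + hausdorffDist (Aseq (φ (ψ k))) A)
        atTop (nhds 0) := by
      have t1 : Tendsto (fun k => dist x (y k)) atTop (nhds 0) :=
        squeeze_zero (fun k => dist_nonneg) (fun k => hdy k) hh0
      have t2 : Tendsto (fun k => dist ζ (z (ψ k))) atTop (nhds 0) := by
        have := (tendsto_const_nhds : Tendsto (fun _ : ℕ => ζ) atTop (nhds ζ)).dist hzlim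
        simpa using this
      simpa using (t1.add t2).add hh0
    have hm0 : m ≤ 0 := ge_of_tendsto' hrhs hkey
    have hmin : infDist (x + ζ) A ≤ 0 ∨ infDist (x - ζ) A ≤ 0 := min_le_iff.mp hm0
    have hclosed := hAc.isClosed
    rcases hmin with h | h
    · left
      exact (hclosed.mem_iff_infDist_zero hAne).mpr (le_antisymm h Metric.infDist_nonneg)
    · right
      exact (hclosed.mem_iff_infDist_zero hAne).mpr (le_antisymm h Metric.infDist_nonneg)
  rw [hS, Set.mem_singleton_iff] at hζspec
  rw [hζspec] at hζfar
  simp at hζfar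
  linarith
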